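/- (Semiboundedness of the minimal relation, core inequality.) Assume the strong Atkinson condition and let ν ∈ ℝ be such that system (S_ν) is disconjugate on [0,∞). Let z, f : ℕ → ℂ^{2n}, zₖ = (xₖ; uₖ), be such that z₀ = 0, zₖ = 0 for all sufficiently large k, z is admissible (xₖ = 𝒜ₖ x_{k+1} + ℬₖ u_{k+1} for all k), and 𝒥(zₖ − 𝒮ₖ z_{k+1}) = Ψₖ fₖ for all k ∈ ℕ. Then Re(Σ_{k=0}^{∞} zₖ* Ψₖ fₖ) ≥ ν Σ_{k=0}^{∞} zₖ* Ψₖ zₖ (both sums have only finitely many nonzero terms and the right-hand side is real and nonnegative), with strict inequality whenever xₖ ≠ 0 for some k. -/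

import Mathlib

open Matrix Filter
open scoped ComplexOrder

noncomputable def Jmat (n : ℕ) : Matrix (Fin n ⊕ Fin n) (Fin n ⊕ Fin n) ℂ :=
  Matrix.fromBlocks 0 1 (-1) 0

noncomputable def PsiMat {n : ℕ} (W : ℕ → Matrix (Fin n) (Fin n) ℂ) (k : ℕ) :
    Matrix (Fin n ⊕ Fin n) (Fin n ⊕ Fin n) ℂ :=
  Matrix.fromBlocks (W k) 0 0 0

noncomputable def Vmat {n : ℕ} (S : ℕ → Matrix (Fin n ⊕ Fin n) (Fin n ⊕ Fin n) ℂ)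
    (W : ℕ → Matrix (Fin n) (Fin n) ℂ) (k : ℕ) :
    Matrix (Fin n ⊕ Fin n) (Fin n ⊕ Fin n) ℂ :=
  -(Jmat n * PsiMat W k * S k)

/-- The quadratic functional `F_λ^{[M,N]}` associated with the system, where
`𝒞ₖ(λ) = 𝒞ₖ + λ𝒲ₖ𝒜ₖ` and `𝒟ₖ(λ) = 𝒟ₖ + λ𝒲ₖℬₖ`. -/
noncomputable def Fquad {n : ℕ} (A B C D W : ℕ → Matrix (Fin n) (Fin n) ℂ) (lam : ℝ)
    (x u : ℕ → Fin n → ℂ) (M N : ℕ) : ℂ :=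
  -(∑ k ∈ Finset.Icc M N,
      (star (x (k + 1)) ⬝ᵥ (((C k + (lam : ℂ) • (W k * A k))ᴴ * A k) *ᵥ x (k + 1))
        + 2 * ((star (x (k + 1)) ⬝ᵥ (((C k + (lam : ℂ) • (W k * A k))ᴴ * B k) *ᵥ u (k + 1))).re : ℂ)
        + star (u (k + 1)) ⬝ᵥ (((D k + (lam : ℂ) • (W k * B k))ᴴ * B k) *ᵥ u (k + 1))))

/-- System `(S_ν)` is disconjugate on `[M, N+1]`: for every admissible `z = (x; u)` on `[M,N]`
with `x_M = 0 = x_{N+1}` and `x` not identically zero on `[M,N+1]`, the value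
`F_ν^{[M,N]}(z)` is a positive real number. -/
def DisconjugateOn {n : ℕ} (A B C D W : ℕ → Matrix (Fin n) (Fin n) ℂ) (nu : ℝ)
    (M N : ℕ) : Prop :=
  ∀ x u : ℕ → Fin n → ℂ,
    (∀ k, M ≤ k → k ≤ N → x k = A k *ᵥ x (k + 1) + B k *ᵥ u (k + 1)) →
    x M = 0 → x (N + 1) = 0 →
    (∃ k, M ≤ k ∧ k ≤ N + 1 ∧ x k ≠ 0) →
    (Fquad A B C D W nu x u M N).im = 0 ∧ 0 < (Fquad A B C D W nu x u M N).re

/-- `Z` is a conjoined basis of system `(S_ν)`: a `2n×n` matrix solution with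
`rank Zₖ = n` and `Zₖ* 𝒥 Zₖ = 0` for all `k`. -/
def IsConjoinedBasis {n : ℕ} (S : ℕ → Matrix (Fin n ⊕ Fin n) (Fin n ⊕ Fin n) ℂ)
    (W : ℕ → Matrix (Fin n) (Fin n) ℂ) (nu : ℝ)
    (Z : ℕ → Matrix (Fin n ⊕ Fin n) (Fin n) ℂ) : Prop :=
  (∀ k, Z k = (S k + (nu : ℂ) • Vmat S W k) * Z (k + 1)) ∧
    ∀ k, (Z k).rank = n ∧ (Z k)ᴴ * Jmat n * Z k = 0

/-- `Z̃ = (X̃; Ũ)` is a recessive solution of `(S_ν)`: a conjoined basis such that for all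
sufficiently large `k` the matrix `X̃ₖ` is invertible with `−X̃ₖ⁻¹ ℬₖ (X̃_{k+1}*)⁻¹ ≥ 0`,
and for every conjoined basis `Z = (X; U)` normalized with `Z̃` (i.e. `Zₖ* 𝒥 Z̃ₖ = I`),
the matrix `Xₖ` is invertible for all large `k` and `Xₖ⁻¹ X̃ₖ → 0` as `k → ∞`. -/
def IsRecessive {n : ℕ} (S : ℕ → Matrix (Fin n ⊕ Fin n) (Fin n ⊕ Fin n) ℂ)
    (W B : ℕ → Matrix (Fin n) (Fin n) ℂ) (nu : ℝ)
    (Xt Ut : ℕ → Matrix (Fin n) (Fin n) ℂ) : Prop :=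
  IsConjoinedBasis S W nu (fun k => Matrix.fromRows (Xt k) (Ut k)) ∧
    (∃ k₀ : ℕ, ∀ k, k₀ ≤ k →
      IsUnit (Xt k) ∧ (-((Xt k)⁻¹ * B k * ((Xt (k + 1))ᴴ)⁻¹)).PosSemidef) ∧
    ∀ X U : ℕ → Matrix (Fin n) (Fin n) ℂ,
      IsConjoinedBasis S W nu (fun k => Matrix.fromRows (X k) (U k)) →
      (∀ k, (Matrix.fromRows (X k) (U k))ᴴ * Jmat n * Matrix.fromRows (Xt k) (Ut k) = 1) →
      (∃ k₁ : ℕ, ∀ k, k₁ ≤ k → IsUnit (X k)) ∧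
        Filter.Tendsto (fun k => (X k)⁻¹ * Xt k) Filter.atTop (nhds 0)

/-- The system is eventually controllable: there is `N` such that on any finite subinterval
`{K,…,M}` of `[N,∞)` the only `u` with `0 = ℬₖ u_{k+1}` and `uₖ = 𝒟ₖ u_{k+1}` for all
`k ∈ {K,…,M−1}` is the trivial one. -/
def EventuallyControllable {n : ℕ} (B D : ℕ → Matrix (Fin n) (Fin n) ℂ) : Prop :=
  ∃ N : ℕ, ∀ K M : ℕ, N ≤ K → K < M →
    ∀ u : ℕ → Fin n → ℂ,
      (∀ k, K ≤ k → k < M → B k *ᵥ u (k + 1) = 0 ∧ u k = D k *ᵥ u (k + 1)) →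
      ∀ k, K ≤ k → k ≤ M → u k = 0

/-- The strong Atkinson (definiteness) condition: there are `λ₀ ∈ ℂ` and `a ≤ b` in `ℕ`
such that every solution `z` of `(S_{λ₀})` with `Σ_{k=a}^{b} zₖ*Ψₖzₖ = 0` vanishes
identically. -/
def StrongAtkinson {n : ℕ} (S : ℕ → Matrix (Fin n ⊕ Fin n) (Fin n ⊕ Fin n) ℂ)
    (W : ℕ → Matrix (Fin n) (Fin n) ℂ) : Prop :=
  ∃ (lam0 : ℂ) (a b : ℕ), a ≤ b ∧
    ∀ z : ℕ → (Fin n ⊕ Fin n) → ℂ,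
      (∀ k, z k = (S k + lam0 • Vmat S W k) *ᵥ z (k + 1)) →
      (∑ k ∈ Finset.Icc a b, star (z k) ⬝ᵥ (PsiMat W k *ᵥ z k)) = 0 →
      ∀ k, z k = 0

namespace St15

noncomputable def qf {n : ℕ} (M : Matrix (Fin n) (Fin n) ℂ) (a b : Fin n → ℂ) : ℂ :=
  star a ⬝ᵥ (M *ᵥ b)

lemma qf_star {n : ℕ} (M : Matrix (Fin n) (Fin n) ℂ) (a b : Fin n → ℂ) :
    star (qf M a b) = qf Mᴴ b a := by
  unfold qf
  rw [Matrix.star_dotProduct, star_star, Matrix.star_mulVec, ← Matrix.dotProduct_mulVec]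

lemma qf_re_swap {n : ℕ} (M : Matrix (Fin n) (Fin n) ℂ) (a b : Fin n → ℂ) :
    (qf M a b).re = (qf Mᴴ b a).re := by
  rw [← qf_star]; exact (Complex.conj_re _).symm

lemma qf_add_left {n : ℕ} (M : Matrix (Fin n) (Fin n) ℂ) (a b c : Fin n → ℂ) :
    qf M (a + b) c = qf M a c + qf M b c := by
  unfold qf; rw [star_add, add_dotProduct]

lemma qf_add_right {n : ℕ} (M : Matrix (Fin n) (Fin n) ℂ) (a b c : Fin n → ℂ) :
    qf M a (b + c) = qf M a b + qf M a c := by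
  unfold qf; rw [Matrix.mulVec_add, dotProduct_add]

lemma qf_mulVec_left {n : ℕ} (M A : Matrix (Fin n) (Fin n) ℂ) (p b : Fin n → ℂ) :
    qf M (A *ᵥ p) b = qf (Aᴴ * M) p b := by
  unfold qf
  rw [Matrix.star_mulVec, ← Matrix.dotProduct_mulVec, Matrix.mulVec_mulVec]

lemma qf_mulVec_right {n : ℕ} (M A : Matrix (Fin n) (Fin n) ℂ) (a p : Fin n → ℂ) :
    qf M a (A *ᵥ p) = qf (M * A) a p := by
  unfold qf; rw [Matrix.mulVec_mulVec]

lemma qf_madd {n : ℕ} (M N : Matrix (Fin n) (Fin n) ℂ) (a b : Fin n → ℂ) :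
    qf (M + N) a b = qf M a b + qf N a b := by
  unfold qf; rw [Matrix.add_mulVec, dotProduct_add]

lemma qf_smul {n : ℕ} (c : ℂ) (M : Matrix (Fin n) (Fin n) ℂ) (a b : Fin n → ℂ) :
    qf (c • M) a b = c * qf M a b := by
  unfold qf; rw [Matrix.smul_mulVec, dotProduct_smul, smul_eq_mul]

lemma qf_one {n : ℕ} (a b : Fin n → ℂ) : qf 1 a b = star a ⬝ᵥ b := by
  unfold qf; rw [Matrix.one_mulVec]

lemma key_identity {n : ℕ} (A B C D W : Matrix (Fin n) (Fin n) ℂ)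
    (hsymp : Aᴴ * D - Cᴴ * B = 1) (hWH : Wᴴ = W) (ν : ℝ) (p q : Fin n → ℂ) :
    (star p ⬝ᵥ q - star (A *ᵥ p + B *ᵥ q) ⬝ᵥ (C *ᵥ p + D *ᵥ q)).re
      - ν * (star (A *ᵥ p + B *ᵥ q) ⬝ᵥ (W *ᵥ (A *ᵥ p + B *ᵥ q))).re
    = (-(star p ⬝ᵥ (((C + (ν:ℂ) • (W * A))ᴴ * A) *ᵥ p)
        + 2 * (((star p ⬝ᵥ (((C + (ν:ℂ) • (W * A))ᴴ * B) *ᵥ q)).re : ℝ) : ℂ)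
        + star q ⬝ᵥ (((D + (ν:ℂ) • (W * B))ᴴ * B) *ᵥ q)).re) := by
  have hCν : (C + (ν:ℂ) • (W * A))ᴴ = Cᴴ + (ν:ℂ) • (Aᴴ * W) := by
    rw [conjTranspose_add, conjTranspose_smul, Matrix.conjTranspose_mul, hWH,
      Complex.star_def, Complex.conj_ofReal]
  have hDν : (D + (ν:ℂ) • (W * B))ᴴ = Dᴴ + (ν:ℂ) • (Bᴴ * W) := by
    rw [conjTranspose_add, conjTranspose_smul, Matrix.conjTranspose_mul, hWH,
      Complex.star_def, Complex.conj_ofReal]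
  have E2 : star (A *ᵥ p + B *ᵥ q) ⬝ᵥ (C *ᵥ p + D *ᵥ q)
      = qf (Aᴴ * C) p p + qf (Aᴴ * D) p q + qf (Bᴴ * C) q p + qf (Bᴴ * D) q q := by
    rw [dotProduct_add]
    show qf C _ p + qf D _ q = _
    rw [qf_add_left, qf_add_left, qf_mulVec_left, qf_mulVec_left, qf_mulVec_left,
      qf_mulVec_left]
    ring
  have E3 : star (A *ᵥ p + B *ᵥ q) ⬝ᵥ (W *ᵥ (A *ᵥ p + B *ᵥ q))
      = qf (Aᴴ * W * A) p p + qf (Aᴴ * W * B) p q + qf (Bᴴ * W * A) q p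
        + qf (Bᴴ * W * B) q q := by
    show qf W _ _ = _
    rw [qf_add_left, qf_mulVec_left, qf_mulVec_left, qf_add_right, qf_add_right,
      qf_mulVec_right, qf_mulVec_right, qf_mulVec_right, qf_mulVec_right]
    ring
  have E4 : star p ⬝ᵥ (((C + (ν:ℂ) • (W * A))ᴴ * A) *ᵥ p)
      = qf (Cᴴ * A) p p + (ν:ℂ) * qf (Aᴴ * W * A) p p := by
    show qf _ p p = _
    rw [hCν, Matrix.add_mul, qf_madd, Matrix.smul_mul, qf_smul, Matrix.mul_assoc]
  have E5 : star p ⬝ᵥ (((C + (ν:ℂ) • (W * A))ᴴ * B) *ᵥ q)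
      = qf (Cᴴ * B) p q + (ν:ℂ) * qf (Aᴴ * W * B) p q := by
    show qf _ p q = _
    rw [hCν, Matrix.add_mul, qf_madd, Matrix.smul_mul, qf_smul, Matrix.mul_assoc]
  have E6 : star q ⬝ᵥ (((D + (ν:ℂ) • (W * B))ᴴ * B) *ᵥ q)
      = qf (Dᴴ * B) q q + (ν:ℂ) * qf (Bᴴ * W * B) q q := by
    show qf _ q q = _
    rw [hDν, Matrix.add_mul, qf_madd, Matrix.smul_mul, qf_smul, Matrix.mul_assoc]
  have hAD : qf (Aᴴ * D) p q = star p ⬝ᵥ q + qf (Cᴴ * B) p q := by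
    have h : Aᴴ * D = 1 + Cᴴ * B := by
      rw [← hsymp]; rw [sub_add_cancel]
    rw [h, qf_madd, qf_one]
  have swap' : ∀ (M N : Matrix (Fin n) (Fin n) ℂ) (a b : Fin n → ℂ),
      (qf (Mᴴ * N) a b).re = (qf (Nᴴ * M) b a).re := by
    intro M N a b
    rw [qf_re_swap, Matrix.conjTranspose_mul, conjTranspose_conjTranspose]
  have s1 : (qf (Aᴴ * C) p p).re = (qf (Cᴴ * A) p p).re := swap' A C p p
  have s2 : (qf (Bᴴ * C) q p).re = (qf (Cᴴ * B) p q).re := swap' B C q p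
  have s3 : (qf (Bᴴ * D) q q).re = (qf (Dᴴ * B) q q).re := swap' B D q q
  have s4 : (qf (Bᴴ * W * A) q p).re = (qf (Aᴴ * W * B) p q).re := by
    have h1 : Bᴴ * W * A = Bᴴ * (W * A) := by rw [Matrix.mul_assoc]
    have h2 : (W * A)ᴴ * B = Aᴴ * W * B := by
      rw [Matrix.conjTranspose_mul, hWH, Matrix.mul_assoc]
    rw [h1, swap' B (W * A) q p, h2]
  rw [E2, E3, E4, E5, E6, hAD]
  simp only [Complex.sub_re, Complex.add_re, Complex.neg_re, Complex.re_ofReal_mul,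
    Complex.ofReal_re, Complex.mul_re, Complex.re_ofNat, Complex.im_ofNat,
    Complex.ofReal_im, mul_zero, zero_mul, sub_zero]
  rw [s2, s3, s4]
  rw [s1]
  ring

end St15

/-- Semiboundedness of the minimal relation, core inequality: under the
strong Atkinson condition and disconjugacy of `(S_ν)` on `[0,∞)`, for any compactly
supported `z = (x; u)` with `z₀ = 0`, admissible and with `𝒥(zₖ − 𝒮ₖ z_{k+1}) = Ψₖ fₖ`,
one has `Re ⟨z, f⟩_Ψ ≥ ν ⟨z, z⟩_Ψ` (the latter quantity being real and nonnegative), with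
strict inequality whenever `x` is not identically zero. -/
theorem statement15 {n : ℕ} (hn : 1 ≤ n)
    (S : ℕ → Matrix (Fin n ⊕ Fin n) (Fin n ⊕ Fin n) ℂ)
    (A B C D W : ℕ → Matrix (Fin n) (Fin n) ℂ)
    (hS : ∀ k, (S k)ᴴ * Jmat n * S k = Jmat n)
    (hblocks : ∀ k, S k = Matrix.fromBlocks (A k) (B k) (C k) (D k))
    (hW : ∀ k, (W k).PosDef)
    (hAtk : StrongAtkinson S W)
    (nu : ℝ)
    (hdis : ∀ N, DisconjugateOn A B C D W nu 0 N)
    (x u : ℕ → Fin n → ℂ) (f : ℕ → (Fin n ⊕ Fin n) → ℂ)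
    (hz0 : Sum.elim (x 0) (u 0) = 0)
    (hfin : ∃ N : ℕ, ∀ k, N ≤ k → Sum.elim (x k) (u k) = 0)
    (hadm : ∀ k, x k = A k *ᵥ x (k + 1) + B k *ᵥ u (k + 1))
    (heq : ∀ k, Jmat n *ᵥ (Sum.elim (x k) (u k) - S k *ᵥ Sum.elim (x (k + 1)) (u (k + 1)))
        = PsiMat W k *ᵥ f k) :
    (∑' k : ℕ, star (Sum.elim (x k) (u k)) ⬝ᵥ (PsiMat W k *ᵥ Sum.elim (x k) (u k))).im = 0 ∧
      0 ≤ (∑' k : ℕ, star (Sum.elim (x k) (u k)) ⬝ᵥ (PsiMat W k *ᵥ Sum.elim (x k) (u k))).re ∧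
      nu * (∑' k : ℕ, star (Sum.elim (x k) (u k)) ⬝ᵥ
            (PsiMat W k *ᵥ Sum.elim (x k) (u k))).re ≤
        (∑' k : ℕ, star (Sum.elim (x k) (u k)) ⬝ᵥ (PsiMat W k *ᵥ f k)).re ∧
      ((∃ k, x k ≠ 0) →
        nu * (∑' k : ℕ, star (Sum.elim (x k) (u k)) ⬝ᵥ
              (PsiMat W k *ᵥ Sum.elim (x k) (u k))).re <
          (∑' k : ℕ, star (Sum.elim (x k) (u k)) ⬝ᵥ (PsiMat W k *ᵥ f k)).re) := by
  classical
  obtain ⟨N₀, hN₀⟩ := hfin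
  have hx : ∀ k, N₀ ≤ k → x k = 0 := fun k hk => funext fun i => congrFun (hN₀ k hk) (Sum.inl i)
  have hx0 : x 0 = 0 := funext fun i => congrFun hz0 (Sum.inl i)
  have star_elim : ∀ (a b : Fin n → ℂ), star (Sum.elim a b) = Sum.elim (star a) (star b) :=
    fun a b => funext fun i => by cases i <;> rfl
  have elim_sub : ∀ (a b c d : Fin n → ℂ),
      (Sum.elim a b - Sum.elim c d) = Sum.elim (a - c) (b - d) :=
    fun a b c d => funext fun i => by cases i <;> rfl
  have Psimul : ∀ (k : ℕ) (v : (Fin n ⊕ Fin n) → ℂ),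
      PsiMat W k *ᵥ v = Sum.elim (W k *ᵥ (v ∘ Sum.inl)) 0 := by
    intro k v
    simp only [PsiMat]
    rw [Matrix.fromBlocks_mulVec]
    simp
  have Jmul : ∀ (p q : Fin n → ℂ), Jmat n *ᵥ Sum.elim p q = Sum.elim q (-p) := by
    intro p q
    simp only [Jmat]
    rw [Matrix.fromBlocks_mulVec]
    simp [Matrix.neg_mulVec]
  -- the inl-component of the inhomogeneous equation
  have hWf : ∀ k, W k *ᵥ (f k ∘ Sum.inl)
      = u k - (C k *ᵥ x (k + 1) + D k *ᵥ u (k + 1)) := by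
    intro k
    have h := heq k
    rw [hblocks k, Matrix.fromBlocks_mulVec] at h
    simp only [Sum.elim_comp_inl, Sum.elim_comp_inr] at h
    rw [elim_sub, Jmul, Psimul] at h
    funext i
    exact (congrFun h (Sum.inl i)).symm
  have hGterm : ∀ k, star (Sum.elim (x k) (u k)) ⬝ᵥ (PsiMat W k *ᵥ Sum.elim (x k) (u k))
      = star (x k) ⬝ᵥ (W k *ᵥ x k) := by
    intro k
    rw [Psimul, star_elim, sumElim_dotProduct_sumElim]
    simp
  have hHterm : ∀ k, star (Sum.elim (x k) (u k)) ⬝ᵥ (PsiMat W k *ᵥ f k)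
      = star (x k) ⬝ᵥ (u k - (C k *ᵥ x (k + 1) + D k *ᵥ u (k + 1))) := by
    intro k
    rw [Psimul, star_elim, sumElim_dotProduct_sumElim, hWf k]
    simp
  set GG : ℂ := ∑ k ∈ Finset.range (N₀ + 1), star (x k) ⬝ᵥ (W k *ᵥ x k) with hGGdef
  set HH : ℂ := ∑ k ∈ Finset.range (N₀ + 1),
      star (x k) ⬝ᵥ (u k - (C k *ᵥ x (k + 1) + D k *ᵥ u (k + 1))) with hHHdef
  have hGeq : (∑' k : ℕ, star (Sum.elim (x k) (u k)) ⬝ᵥ (PsiMat W k *ᵥ Sum.elim (x k) (u k)))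
      = GG := by
    rw [tsum_eq_sum (s := Finset.range (N₀ + 1)) (by
      intro k hk
      rw [hN₀ k (by simp [Finset.mem_range] at hk; omega)]
      simp)]
    exact Finset.sum_congr rfl fun k _ => hGterm k
  have hHeq : (∑' k : ℕ, star (Sum.elim (x k) (u k)) ⬝ᵥ (PsiMat W k *ᵥ f k)) = HH := by
    rw [tsum_eq_sum (s := Finset.range (N₀ + 1)) (by
      intro k hk
      rw [hN₀ k (by simp [Finset.mem_range] at hk; omega)]
      simp)]
    exact Finset.sum_congr rfl fun k _ => hHterm k
  rw [hGeq, hHeq]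
  have hGpos : 0 ≤ GG := Finset.sum_nonneg fun k _ => ((hW k).posSemidef).dotProduct_mulVec_nonneg (x k)
  obtain ⟨hGre, hGim⟩ := Complex.nonneg_iff.mp hGpos
  refine ⟨hGim.symm, hGre, ?_⟩
  -- symplectic relation
  have hsymp : ∀ k, (A k)ᴴ * D k - (C k)ᴴ * B k = 1 := by
    intro k
    have h := hS k
    rw [hblocks k] at h
    simp only [Jmat] at h
    rw [Matrix.fromBlocks_conjTranspose, Matrix.fromBlocks_multiply,
      Matrix.fromBlocks_multiply] at h
    have h12 := congrArg Matrix.toBlocks₁₂ h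
    simp only [Matrix.toBlocks_fromBlocks₁₂] at h12
    rw [← h12]
    simp [Matrix.mul_neg, Matrix.neg_mul]
    abel
  by_cases hxall : ∀ k, x k = 0
  · have hGG0 : GG = 0 := Finset.sum_eq_zero fun k _ => by rw [hxall k]; simp
    have hHH0 : HH = 0 := Finset.sum_eq_zero fun k _ => by rw [hxall k]; simp
    constructor
    · rw [hGG0, hHH0]; simp
    · rintro ⟨k, hk⟩; exact absurd (hxall k) hk
  · push_neg at hxall
    obtain ⟨k₀, hk₀⟩ := hxall
    have hk₀N : k₀ < N₀ := by
      by_contra hcon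
      exact hk₀ (hx k₀ (le_of_not_gt hcon))
    -- the key real identity
    have hiden : HH.re - nu * GG.re = (Fquad A B C D W nu x u 0 N₀).re := by
      have htel : ∑ k ∈ Finset.range (N₀ + 1), star (x k) ⬝ᵥ u k
          = ∑ k ∈ Finset.range (N₀ + 1), star (x (k + 1)) ⬝ᵥ u (k + 1) := by
        rw [Finset.sum_range_succ' (fun k => star (x k) ⬝ᵥ u k) N₀,
          Finset.sum_range_succ (fun k => star (x (k + 1)) ⬝ᵥ u (k + 1)) N₀]
        rw [hx0, hx (N₀ + 1) (Nat.le_succ N₀)]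
        simp
      have hsplit : HH = (∑ k ∈ Finset.range (N₀ + 1), star (x (k + 1)) ⬝ᵥ u (k + 1))
          - ∑ k ∈ Finset.range (N₀ + 1),
              star (x k) ⬝ᵥ (C k *ᵥ x (k + 1) + D k *ᵥ u (k + 1)) := by
        rw [← htel, ← Finset.sum_sub_distrib]
        exact Finset.sum_congr rfl fun k _ => dotProduct_sub _ _ _
      have hIcc : Finset.Icc 0 N₀ = Finset.range (N₀ + 1) := by
        ext a; simp [Nat.lt_succ_iff]
      have hperk : ∀ k, (star (x (k + 1)) ⬝ᵥ u (k + 1)).re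
            - (star (x k) ⬝ᵥ (C k *ᵥ x (k + 1) + D k *ᵥ u (k + 1))).re
            - nu * (star (x k) ⬝ᵥ (W k *ᵥ x k)).re
          = -((star (x (k + 1)) ⬝ᵥ (((C k + (nu : ℂ) • (W k * A k))ᴴ * A k) *ᵥ x (k + 1))
              + 2 * (((star (x (k + 1)) ⬝ᵥ (((C k + (nu : ℂ) • (W k * A k))ᴴ * B k) *ᵥ
                  u (k + 1))).re : ℝ) : ℂ)
              + star (u (k + 1)) ⬝ᵥ (((D k + (nu : ℂ) • (W k * B k))ᴴ * B k) *ᵥ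
                  u (k + 1))).re) := by
        intro k
        have h := St15.key_identity (A k) (B k) (C k) (D k) (W k) (hsymp k) ((hW k).1) nu
          (x (k + 1)) (u (k + 1))
        rw [Complex.sub_re] at h
        rw [hadm k]
        linarith [h]
      calc HH.re - nu * GG.re
          = ∑ k ∈ Finset.range (N₀ + 1),
              ((star (x (k + 1)) ⬝ᵥ u (k + 1)).re
                - (star (x k) ⬝ᵥ (C k *ᵥ x (k + 1) + D k *ᵥ u (k + 1))).re
                - nu * (star (x k) ⬝ᵥ (W k *ᵥ x k)).re) := by
            rw [hsplit, hGGdef, Complex.sub_re, Complex.re_sum, Complex.re_sum,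
              Complex.re_sum, Finset.mul_sum, ← Finset.sum_sub_distrib,
              ← Finset.sum_sub_distrib]
        _ = ∑ k ∈ Finset.range (N₀ + 1),
              -((star (x (k + 1)) ⬝ᵥ (((C k + (nu : ℂ) • (W k * A k))ᴴ * A k) *ᵥ x (k + 1))
              + 2 * (((star (x (k + 1)) ⬝ᵥ (((C k + (nu : ℂ) • (W k * A k))ᴴ * B k) *ᵥ
                  u (k + 1))).re : ℝ) : ℂ)
              + star (u (k + 1)) ⬝ᵥ (((D k + (nu : ℂ) • (W k * B k))ᴴ * B k) *ᵥ
                  u (k + 1))).re) := Finset.sum_congr rfl fun k _ => hperk k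
        _ = (Fquad A B C D W nu x u 0 N₀).re := by
            rw [Fquad, hIcc, Complex.neg_re, Complex.re_sum]
            rw [Finset.sum_neg_distrib]
    -- apply disconjugacy
    have hdisc := hdis N₀ x u (fun k _ _ => hadm k) hx0 (hx (N₀ + 1) (Nat.le_succ N₀))
      ⟨k₀, Nat.zero_le _, by omega, hk₀⟩
    constructor
    · linarith [hdisc.2, hiden]
    · intro _
      linarith [hdisc.2, hiden]
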